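/- arXiv:2112.00624 — 5 statements merged into one kernel-verified Lean document; each statement's English description precedes it below -/
import Mathlib

section
/- Let W be a nonsingular n×n real matrix. Then min_{‖x‖₂ = 1} ‖Wx‖_∞ ≤ |det W|^{1/n} · √π / (2 · Γ(n/2 + 1)^{1/n}). -/
open Matrix Real

/-- `min_{‖x‖₂ = 1} ‖Wx‖_∞ ≤ |det W|^{1/n} · √π / (2 Γ(n/2+1)^{1/n})`. -/
theorem min_sup_norm_le
    (n : ℕ) (hn : 0 < n)
    (W : Matrix (Fin n) (Fin n) ℝ) (hW : W.det ≠ 0) :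
    ∃ x : Fin n → ℝ, Real.sqrt (∑ i, x i ^ 2) = 1 ∧
      ‖W.mulVec x‖ ≤
        |W.det| ^ ((1 : ℝ) / n) * Real.sqrt π /
          (2 * Real.Gamma ((n : ℝ) / 2 + 1) ^ ((1 : ℝ) / n)) := by
  classical
  haveI : Nonempty (Fin n) := Fin.pos_iff_nonempty.mp hn
  have hn' : (n : ℝ) ≠ 0 := Nat.cast_ne_zero.mpr hn.ne'
  set D := |W.det| with hDdef
  have hD0 : 0 < D := abs_pos.mpr hW
  set G := Real.Gamma ((n : ℝ) / 2 + 1) with hGdef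
  have hG0 : 0 < G := Real.Gamma_pos_of_pos (by positivity)
  set c := D ^ ((1 : ℝ) / n) * Real.sqrt π / (2 * G ^ ((1 : ℝ) / n)) with hcdef
  have hsqrtpi : 0 < Real.sqrt π := Real.sqrt_pos.mpr Real.pi_pos
  have hc0 : 0 < c := by
    apply div_pos (mul_pos (Real.rpow_pos_of_pos hD0 _) hsqrtpi)
    positivity
  by_contra hcon
  push_neg at hcon
  -- `hcon : ∀ x, √(∑ x i ^ 2) = 1 → c < ‖W.mulVec x‖`
  set K := (Matrix.toLin' W) ⁻¹' (Metric.closedBall (0 : Fin n → ℝ) c) with hKdef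
  -- every element of K has Euclidean norm < 1
  have hKsub : ∀ x ∈ K, Real.sqrt (∑ i, x i ^ 2) < 1 := by
    intro x hx
    by_contra h
    push_neg at h
    set s := Real.sqrt (∑ i, x i ^ 2) with hsdef
    have hs0 : 0 < s := lt_of_lt_of_le one_pos h
    set y := s⁻¹ • x with hydef
    have hy1 : Real.sqrt (∑ i, y i ^ 2) = 1 := by
      have : ∑ i, y i ^ 2 = s⁻¹ ^ 2 * ∑ i, x i ^ 2 := by
        rw [Finset.mul_sum]
        refine Finset.sum_congr rfl fun i _ => ?_
        simp [hydef, mul_pow]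
      rw [this, Real.sqrt_mul (sq_nonneg _), Real.sqrt_sq (inv_nonneg.mpr hs0.le), ← hsdef]
      field_simp
    have hxball : ‖W.mulVec x‖ ≤ c := by
      have := hx
      simp only [hKdef, Set.mem_preimage, Metric.mem_closedBall, dist_zero_right,
        Matrix.toLin'_apply] at this
      exact this
    have hWy : ‖W.mulVec y‖ ≤ c := by
      have : W.mulVec y = s⁻¹ • W.mulVec x := by
        rw [hydef, Matrix.mulVec_smul]
      rw [this, norm_smul, Real.norm_eq_abs, abs_of_nonneg (inv_nonneg.mpr hs0.le)]
      calc s⁻¹ * ‖W.mulVec x‖ ≤ 1 * ‖W.mulVec x‖ := by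
            apply mul_le_mul_of_nonneg_right _ (norm_nonneg _)
            exact inv_le_one_of_one_le₀ h
        _ = ‖W.mulVec x‖ := one_mul _
        _ ≤ c := hxball
    exact absurd hWy (not_le.mpr (hcon y hy1))
  -- K is compact
  have hUnit : IsUnit W.det := isUnit_iff_ne_zero.mpr hW
  have hKim : K = (Matrix.toLin' W⁻¹) '' (Metric.closedBall (0 : Fin n → ℝ) c) := by
    ext x
    simp only [hKdef, Set.mem_preimage, Set.mem_image]
    constructor
    · intro hx
      refine ⟨Matrix.toLin' W x, hx, ?_⟩
      rw [← Matrix.toLin'_mul_apply, W.nonsing_inv_mul hUnit, Matrix.toLin'_one,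
        LinearMap.id_apply]
    · rintro ⟨y, hy, rfl⟩
      rwa [← Matrix.toLin'_mul_apply, W.mul_nonsing_inv hUnit, Matrix.toLin'_one,
        LinearMap.id_apply]
  have hKcomp : IsCompact K := by
    rw [hKim]
    exact (isCompact_closedBall 0 c).image (LinearMap.continuous_of_finiteDimensional _)
  have hKne : K.Nonempty := by
    refine ⟨0, ?_⟩
    simp only [hKdef, Set.mem_preimage, map_zero, Metric.mem_closedBall, dist_self]
    exact hc0.le
  -- maximum of the Euclidean norm on K
  have hgcont : Continuous fun x : Fin n → ℝ => Real.sqrt (∑ i, x i ^ 2) :=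
    Real.continuous_sqrt.comp
      (continuous_finset_sum _ fun i _ => (continuous_apply i).pow 2)
  obtain ⟨x₀, hx₀K, hmax⟩ := hKcomp.exists_isMaxOn hKne hgcont.continuousOn
  set m := Real.sqrt (∑ i, x₀ i ^ 2) with hmdef
  have hm0 : 0 ≤ m := Real.sqrt_nonneg _
  have hm1 : m < 1 := hKsub x₀ hx₀K
  -- rewrite Euclidean norm via rpow
  have hrw : ∀ x : Fin n → ℝ,
      (∑ i, |x i| ^ (2 : ℝ)) ^ ((1 : ℝ) / 2) = Real.sqrt (∑ i, x i ^ 2) := by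
    intro x
    rw [← Real.sqrt_eq_rpow]
    congr 1
    refine Finset.sum_congr rfl fun i _ => ?_
    rw [show (2 : ℝ) = ((2 : ℕ) : ℝ) by norm_num, Real.rpow_natCast, sq_abs]
  have hKsub2 : K ⊆ {x : Fin n → ℝ | (∑ i, |x i| ^ (2 : ℝ)) ^ ((1 : ℝ) / 2) ≤ m} := by
    intro x hx
    simp only [Set.mem_setOf_eq, hrw]
    exact hmax hx
  -- volume of K
  have hdet : LinearMap.det (Matrix.toLin' W) ≠ 0 := by
    rwa [LinearMap.det_toLin']
  have hrpow_pow : ∀ a : ℝ, 0 ≤ a → (a ^ ((1 : ℝ) / n)) ^ n = a := by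
    intro a ha
    rw [← Real.rpow_natCast (a ^ ((1 : ℝ) / n)) n, ← Real.rpow_mul ha, one_div,
      inv_mul_cancel₀ hn', Real.rpow_one]
  have hkey : |W.det|⁻¹ * (2 * c) ^ n = Real.sqrt π ^ n / G := by
    have h2c : 2 * c = D ^ ((1 : ℝ) / n) * Real.sqrt π / G ^ ((1 : ℝ) / n) := by
      rw [hcdef]
      field_simp
    rw [h2c, div_pow, mul_pow, hrpow_pow D hD0.le, hrpow_pow G hG0.le, ← hDdef]
    field_simp
  have hvolK : MeasureTheory.volume K = ENNReal.ofReal (Real.sqrt π ^ n / G) := by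
    rw [hKdef, MeasureTheory.Measure.addHaar_preimage_linearMap _ hdet,
      Real.volume_pi_closedBall 0 hc0.le, Fintype.card_fin,
      ← ENNReal.ofReal_mul (abs_nonneg _), LinearMap.det_toLin', abs_inv, hkey]
  -- volume of the Euclidean ball of radius m
  have hvolB : MeasureTheory.volume
      {x : Fin n → ℝ | (∑ i, |x i| ^ (2 : ℝ)) ^ ((1 : ℝ) / 2) ≤ m}
      = ENNReal.ofReal m ^ n * ENNReal.ofReal (Real.sqrt π ^ n / G) := by
    have := MeasureTheory.volume_sum_rpow_le (ι := Fin n) (p := 2) one_le_two m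
    rw [Fintype.card_fin] at this
    rw [this]
    congr 2
    rw [Real.Gamma_add_one (by norm_num), Real.Gamma_one_half_eq]
    rw [show (2 : ℝ) * ((1 : ℝ) / 2 * Real.sqrt π) = Real.sqrt π by ring]
  -- contradiction
  have hv0 : ENNReal.ofReal (Real.sqrt π ^ n / G) ≠ 0 :=
    (ENNReal.ofReal_pos.mpr (div_pos (pow_pos hsqrtpi n) hG0)).ne'
  have hvt : ENNReal.ofReal (Real.sqrt π ^ n / G) ≠ ⊤ := ENNReal.ofReal_ne_top
  have hle : MeasureTheory.volume K ≤
      ENNReal.ofReal m ^ n * ENNReal.ofReal (Real.sqrt π ^ n / G) := by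
    rw [← hvolB]
    exact MeasureTheory.measure_mono hKsub2
  rw [hvolK] at hle
  have hlt : ENNReal.ofReal m ^ n * ENNReal.ofReal (Real.sqrt π ^ n / G) <
      ENNReal.ofReal (Real.sqrt π ^ n / G) := by
    have hm : ENNReal.ofReal m ^ n < 1 := by
      apply pow_lt_one₀ zero_le _ hn.ne'
      exact ENNReal.ofReal_lt_one.mpr hm1
    calc ENNReal.ofReal m ^ n * ENNReal.ofReal (Real.sqrt π ^ n / G)
        < 1 * ENNReal.ofReal (Real.sqrt π ^ n / G) := by
          rw [mul_comm _ (ENNReal.ofReal (Real.sqrt π ^ n / G)), mul_comm 1]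
          exact ENNReal.mul_lt_mul_right hv0 hvt hm
      _ = _ := one_mul _
  exact absurd (lt_of_le_of_lt hle hlt) (lt_irrefl _)
end

section
/- There exists a constant C > 0 such that for every n ≥ 1 and every n×n real matrix W whose columns w₁,…,wₙ satisfy (1/n) Σᵢ ‖wᵢ‖₂ ≤ 1, there exists a unit vector x ∈ ℝⁿ (‖x‖₂ = 1) with ‖Wx‖_∞ ≤ C/√n. -/
open Matrix Real Finset

lemma amgm {n : ℕ} (hn : 1 ≤ n) (f : Fin n → ℝ) (hf : ∀ i, 0 ≤ f i) :
    ∏ i, f i ≤ ((∑ i, f i) / n) ^ n := by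
  have hn0 : (n : ℝ) ≠ 0 := by positivity
  have h := Real.geom_mean_le_arith_mean_weighted Finset.univ (fun _ => 1 / n) f
    (fun i _ => by positivity) (by simp [Finset.card_univ]; field_simp) (fun i _ => hf i)
  have hL : (∏ i, f i ^ (1 / n : ℝ)) ^ n = ∏ i, f i := by
    rw [← Finset.prod_pow]
    refine Finset.prod_congr rfl fun i _ => ?_
    rw [← Real.rpow_natCast (f i ^ (1 / n : ℝ)) n, ← Real.rpow_mul (hf i)]
    field_simp
    simp
  have hR : ∑ i, (1 / n : ℝ) * f i = (∑ i, f i) / n := by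
    rw [← Finset.mul_sum]; ring
  calc ∏ i, f i = (∏ i, f i ^ (1 / n : ℝ)) ^ n := hL.symm
    _ ≤ ((∑ i, f i) / n) ^ n := by
        apply pow_le_pow_left₀ (Finset.prod_nonneg fun i _ => Real.rpow_nonneg (hf i) _)
        rw [← hR]; exact h

lemma det_sq_le {n : ℕ} (hn : 1 ≤ n) (M : Matrix (Fin n) (Fin n) ℝ) :
    (det M) ^ 2 ≤ ((∑ i, ∑ j, M j i ^ 2) / n) ^ n := by
  set G : Matrix (Fin n) (Fin n) ℝ := Mᴴ * M with hG
  have hps : G.PosSemidef := posSemidef_conjTranspose_mul_self M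
  have hH := hps.isHermitian
  have hdet : det G = (det M) ^ 2 := by
    rw [hG, det_mul, det_conjTranspose, sq]
    simp
  have htr : trace G = ∑ i, hH.eigenvalues i := by
    rw [hH.trace_eq_sum_eigenvalues]
    simp
  have htr2 : trace G = ∑ i, ∑ j, M j i ^ 2 := by
    rw [hG]
    simp [Matrix.trace, Matrix.diag, Matrix.mul_apply, sq]
  have hprod : (det M) ^ 2 = ∏ i, hH.eigenvalues i := by
    rw [← hdet, hH.det_eq_prod_eigenvalues]; norm_num
  rw [hprod]
  calc ∏ i, hH.eigenvalues i ≤ ((∑ i, hH.eigenvalues i) / n) ^ n :=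
        amgm hn _ (fun i => hps.eigenvalues_nonneg i)
    _ = ((∑ i, ∑ j, M j i ^ 2) / n) ^ n := by rw [← htr, htr2]

noncomputable def sg (b : Bool) : ℝ := if b then 1 else -1

lemma sg_sq (b : Bool) : sg b ^ 2 = 1 := by cases b <;> simp [sg]

lemma sg_not (b : Bool) : sg (!b) = - sg b := by cases b <;> simp [sg]

lemma orth {n : ℕ} {i k : Fin n} (h : i ≠ k) :
    ∑ b : Fin n → Bool, sg (b i) * sg (b k) = 0 := by
  set f : (Fin n → Bool) → ℝ := fun b => sg (b i) * sg (b k) with hf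
  have inv : Function.Involutive (fun b : Fin n → Bool => Function.update b i (!(b i))) := by
    intro b
    funext j
    by_cases hj : j = i
    · subst hj; simp [Function.update_self]
    · simp [Function.update_of_ne hj]
  have hsum : ∑ b : Fin n → Bool, f b =
      ∑ b : Fin n → Bool, f (Function.update b i (!(b i))) :=
    (Fintype.sum_bijective _ inv.bijective _ _ (fun b => rfl)).symm
  have hneg : ∀ b : Fin n → Bool, f (Function.update b i (!(b i))) = - f b := by
    intro b
    simp only [hf, Function.update_self, Function.update_of_ne (Ne.symm h), sg_not]
    ring
  simp only [hneg, Finset.sum_neg_distrib] at hsum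
  linarith

lemma orth_diag {n : ℕ} (i : Fin n) :
    ∑ b : Fin n → Bool, sg (b i) * sg (b i) = 2 ^ n := by
  have : ∀ b : Fin n → Bool, sg (b i) * sg (b i) = 1 := by
    intro b; have := sg_sq (b i); nlinarith [sg_sq (b i)]
  simp only [this, Finset.sum_const, Finset.card_univ]
  simp [Fintype.card_fun]

lemma exists_signs {n : ℕ} (A : Matrix (Fin n) (Fin n) ℝ) :
    ∃ ε : Fin n → ℝ, (∀ i, ε i = 1 ∨ ε i = -1) ∧
      ∑ i, ∑ j, A j i ^ 2 ≤ ∑ j, (A.mulVec ε j) ^ 2 := by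
  have total : ∑ b : Fin n → Bool, ∑ j, (A.mulVec (fun i => sg (b i)) j) ^ 2
      = 2 ^ n * ∑ i, ∑ j, A j i ^ 2 := by
    have step : ∀ b : Fin n → Bool, ∀ j,
        (A.mulVec (fun i => sg (b i)) j) ^ 2
          = ∑ i, ∑ k, (A j i * A j k) * (sg (b i) * sg (b k)) := by
      intro b j
      rw [Matrix.mulVec, dotProduct, sq, Finset.sum_mul_sum]
      refine Finset.sum_congr rfl fun i _ => Finset.sum_congr rfl fun k _ => by ring
    calc ∑ b : Fin n → Bool, ∑ j, (A.mulVec (fun i => sg (b i)) j) ^ 2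
        = ∑ j, ∑ i, ∑ k, (A j i * A j k) * (∑ b : Fin n → Bool, sg (b i) * sg (b k)) := by
          rw [Finset.sum_comm]
          refine Finset.sum_congr rfl fun j _ => ?_
          simp only [step]
          rw [Finset.sum_comm]
          refine Finset.sum_congr rfl fun i _ => ?_
          rw [Finset.sum_comm]
          refine Finset.sum_congr rfl fun k _ => ?_
          rw [← Finset.mul_sum]
      _ = ∑ j, ∑ i, A j i ^ 2 * 2 ^ n := by
          refine Finset.sum_congr rfl fun j _ => Finset.sum_congr rfl fun i _ => ?_
          rw [Finset.sum_eq_single i]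
          · rw [orth_diag]; ring
          · intro k _ hki; rw [orth (Ne.symm hki)]; ring
          · intro h; exact absurd (Finset.mem_univ i) h
      _ = 2 ^ n * ∑ i, ∑ j, A j i ^ 2 := by
          rw [Finset.sum_comm, Finset.mul_sum]
          refine Finset.sum_congr rfl fun i _ => ?_
          rw [Finset.mul_sum]
          refine Finset.sum_congr rfl fun j _ => by ring
  have havg : ∑ b : Fin n → Bool, (∑ i, ∑ j, A j i ^ 2)
      ≤ ∑ b : Fin n → Bool, ∑ j, (A.mulVec (fun i => sg (b i)) j) ^ 2 := by
    rw [total, Finset.sum_const, Finset.card_univ]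
    simp [Fintype.card_fun]
  obtain ⟨b, _, hb⟩ := Finset.exists_le_of_sum_le ⟨Classical.arbitrary _, Finset.mem_univ _⟩ havg
  exact ⟨fun i => sg (b i),
    fun i => by rcases Bool.dichotomy (b i) with h | h <;> simp [sg, h], hb⟩

lemma normalize_unit {n : ℕ} (v : Fin n → ℝ) (hv : 0 < ∑ i, v i ^ 2) :
    Real.sqrt (∑ i, ((Real.sqrt (∑ i, v i ^ 2))⁻¹ • v) i ^ 2) = 1 := by
  set Q := ∑ i, v i ^ 2 with hQ
  have hs : 0 < Real.sqrt Q := Real.sqrt_pos.mpr hv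
  have : ∑ i, ((Real.sqrt Q)⁻¹ • v) i ^ 2 = (Real.sqrt Q)⁻¹ ^ 2 * Q := by
    rw [hQ, Finset.mul_sum]
    exact Finset.sum_congr rfl fun i _ => by simp [Pi.smul_apply]; ring
  rw [this, Real.sqrt_mul (by positivity), Real.sqrt_sq (by positivity)]
  exact inv_mul_cancel₀ hs.ne'

/-- Spherical Komlós with mean-norm hypothesis. -/
theorem spherical_komlos_mean :
    ∃ C : ℝ, 0 < C ∧ ∀ n : ℕ, 1 ≤ n → ∀ W : Matrix (Fin n) (Fin n) ℝ,
      (1 / n : ℝ) * ∑ i, Real.sqrt (∑ j, W j i ^ 2) ≤ 1 →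
      ∃ x : Fin n → ℝ, Real.sqrt (∑ i, x i ^ 2) = 1 ∧
        ‖W.mulVec x‖ ≤ C / Real.sqrt n := by
  refine ⟨1, one_pos, ?_⟩
  intro n hn W hW
  have hn0 : (0 : ℝ) < n := by exact_mod_cast Nat.lt_of_lt_of_le Nat.zero_lt_one hn
  have hsqn : 0 < Real.sqrt n := Real.sqrt_pos.mpr hn0
  by_cases hdet : det W = 0
  · obtain ⟨v, hv0, hWv⟩ := (Matrix.exists_mulVec_eq_zero_iff).mpr hdet
    have hQ : 0 < ∑ i, v i ^ 2 := by
      obtain ⟨i, hi⟩ := Function.ne_iff.mp hv0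
      have h1 : 0 < v i ^ 2 :=
        lt_of_le_of_ne (sq_nonneg _) (Ne.symm (pow_ne_zero 2 hi))
      exact lt_of_lt_of_le h1
        (Finset.single_le_sum (f := fun j => v j ^ 2) (fun j _ => sq_nonneg _) (mem_univ i))
    refine ⟨(Real.sqrt (∑ i, v i ^ 2))⁻¹ • v, normalize_unit v hQ, ?_⟩
    rw [Matrix.mulVec_smul, hWv, smul_zero, norm_zero]
    positivity
  · have hu : IsUnit W.det := isUnit_iff_ne_zero.mpr hdet
    set r : Fin n → ℝ := fun i => Real.sqrt (∑ j, W j i ^ 2) with hr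
    have hrnn : ∀ i, 0 ≤ r i := fun i => Real.sqrt_nonneg _
    have hr2 : ∀ i, r i ^ 2 = ∑ j, W j i ^ 2 := fun i =>
      Real.sq_sqrt (Finset.sum_nonneg fun j _ => sq_nonneg _)
    have hrpos : ∀ i, 0 < r i := by
      intro i
      rcases (hrnn i).lt_or_eq with h | h
      · exact h
      · exfalso
        apply hdet
        apply Matrix.det_eq_zero_of_column_eq_zero i
        intro j
        have hsum : ∑ j, W j i ^ 2 = 0 := by
          rw [← hr2 i, ← h]; ring
        have := (Finset.sum_eq_zero_iff_of_nonneg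
          (fun j (_ : j ∈ univ) => sq_nonneg (W j i))).mp hsum j (mem_univ j)
        exact pow_eq_zero_iff (n := 2) (by norm_num) |>.mp this
    set B : Matrix (Fin n) (Fin n) ℝ := W * diagonal (fun i => (r i)⁻¹) with hB
    have hBapp : ∀ j i, B j i = W j i * (r i)⁻¹ := fun j i => Matrix.mul_diagonal ..
    have hBcol : ∀ i, ∑ j, B j i ^ 2 = 1 := by
      intro i
      have h1 : ∑ j, B j i ^ 2 = (∑ j, W j i ^ 2) * ((r i)⁻¹) ^ 2 := by
        rw [Finset.sum_mul]
        exact Finset.sum_congr rfl fun j _ => by rw [hBapp]; ring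
      rw [h1, ← hr2 i, ← mul_pow, mul_inv_cancel₀ (hrpos i).ne', one_pow]
    -- (det W)^2 ≤ 1
    have hdb := det_sq_le hn B
    have hBF : ∑ i, ∑ j, B j i ^ 2 = (n : ℝ) := by
      simp [hBcol]
    rw [hBF] at hdb
    have hdb1 : (det B) ^ 2 ≤ 1 := by
      rw [div_self hn0.ne', one_pow] at hdb
      exact hdb
    have hdetB : det B = det W * ∏ i, (r i)⁻¹ := by
      rw [hB, det_mul, det_diagonal]
    have hprodpos : 0 < ∏ i, r i := Finset.prod_pos fun i _ => hrpos i
    have hprodle : ∏ i, r i ≤ 1 := by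
      have h1 : ∏ i, r i ≤ ((∑ i, r i) / n) ^ n := amgm hn r hrnn
      have h2 : (∑ i, r i) / n ≤ 1 := by
        rw [div_le_one hn0]
        have := hW
        rw [one_div, inv_mul_le_iff₀ hn0] at this
        simpa using this
      calc ∏ i, r i ≤ ((∑ i, r i) / n) ^ n := h1
        _ ≤ 1 := pow_le_one₀ (div_nonneg (Finset.sum_nonneg fun i _ => hrnn i) hn0.le) h2
    have hdW : (det W) ^ 2 ≤ 1 := by
      have hinv : ∏ i, (r i)⁻¹ = (∏ i, r i)⁻¹ := by
        rw [← Finset.prod_inv_distrib]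
      have h3 : (det W) ^ 2 * ((∏ i, r i)⁻¹) ^ 2 ≤ 1 := by
        rw [← mul_pow, ← hinv, ← hdetB]; exact hdb1
      have key : (det W) ^ 2 = (det B) ^ 2 * (∏ i, r i) ^ 2 := by
        rw [hdetB, hinv, mul_pow, mul_assoc, ← mul_pow,
          inv_mul_cancel₀ hprodpos.ne', one_pow, mul_one]
      rw [key]
      have hP1 : (∏ i, r i) ^ 2 ≤ 1 := by nlinarith
      calc (det B) ^ 2 * (∏ i, r i) ^ 2 ≤ 1 * (∏ i, r i) ^ 2 :=
            mul_le_mul_of_nonneg_right hdb1 (sq_nonneg _)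
        _ ≤ 1 := by nlinarith
    -- the inverse matrix has large Frobenius norm
    set A : Matrix (Fin n) (Fin n) ℝ := W⁻¹ with hA
    have hdetA : det A = (det W)⁻¹ := by rw [hA, Matrix.det_nonsing_inv, Ring.inverse_eq_inv']
    have hdA1 : 1 ≤ (det A) ^ 2 := by
      rw [hdetA, ← one_div, div_pow, one_pow, le_div_iff₀ (by positivity)]
      linarith [hdW]
    have hFA : (n : ℝ) ≤ ∑ i, ∑ j, A j i ^ 2 := by
      have h5 := det_sq_le hn A
      have h6 : (1 : ℝ) ≤ ((∑ i, ∑ j, A j i ^ 2) / n) ^ n := le_trans hdA1 h5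
      by_contra hcon
      push_neg at hcon
      have h7 : (∑ i, ∑ j, A j i ^ 2) / n < 1 := by
        rw [div_lt_one hn0]; exact hcon
      have h8 : ((∑ i, ∑ j, A j i ^ 2) / n) ^ n < 1 := by
        apply pow_lt_one₀ (by positivity) h7 (by omega)
      linarith
    obtain ⟨ε, hε1, hε2⟩ := exists_signs A
    set v : Fin n → ℝ := A.mulVec ε with hv
    have hQn : (n : ℝ) ≤ ∑ j, v j ^ 2 := le_trans hFA hε2
    have hQ0 : 0 < ∑ j, v j ^ 2 := lt_of_lt_of_le hn0 hQn
    refine ⟨(Real.sqrt (∑ j, v j ^ 2))⁻¹ • v, normalize_unit v hQ0, ?_⟩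
    have hWv : W.mulVec v = ε := by
      rw [hv, Matrix.mulVec_mulVec, Matrix.mul_nonsing_inv _ hu, Matrix.one_mulVec]
    rw [Matrix.mulVec_smul, hWv, norm_smul]
    have hεn : ‖ε‖ ≤ 1 := by
      rw [pi_norm_le_iff_of_nonneg zero_le_one]
      intro i
      rcases hε1 i with h | h <;> rw [h] <;> simp
    have hs : 0 < Real.sqrt (∑ j, v j ^ 2) := Real.sqrt_pos.mpr hQ0
    have hsv : Real.sqrt n ≤ Real.sqrt (∑ j, v j ^ 2) := Real.sqrt_le_sqrt hQn
    calc ‖(Real.sqrt (∑ j, v j ^ 2))⁻¹‖ * ‖ε‖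
        ≤ (Real.sqrt (∑ j, v j ^ 2))⁻¹ * 1 := by
          apply mul_le_mul _ hεn (norm_nonneg _) (inv_nonneg.mpr (Real.sqrt_nonneg _))
          rw [Real.norm_eq_abs, abs_of_nonneg (inv_nonneg.mpr (Real.sqrt_nonneg _))]
      _ ≤ 1 / Real.sqrt n := by
          rw [mul_one, one_div]
          exact inv_anti₀ hsqn hsv
end

section
/- There exists a constant C > 0 such that for every n ≥ 1 and every collection of vectors w₁,…,wₙ ∈ ℝⁿ with ‖wᵢ‖₂ ≤ 1 for each i, there exists a unit vector x ∈ ℝⁿ such that max_i |⟨wᵢ, x⟩| ≤ C/√n. -/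
open Real Matrix MeasureTheory


lemma one_add_inv_pow_le (n : ℕ) (hn : 1 ≤ n) : (1 + 1/(n:ℝ))^n ≤ 3 := by
  have h0 : (0:ℝ) < n := by exact_mod_cast hn
  have h1 : (1 + 1/(n:ℝ)) ≤ Real.exp (1/n) := by
    have := Real.add_one_le_exp (1/(n:ℝ)); linarith
  have h2 : (1 + 1/(n:ℝ))^n ≤ Real.exp (1/n) ^ n := by
    apply pow_le_pow_left₀ (by positivity) h1
  have h3 : Real.exp (1/(n:ℝ)) ^ n = Real.exp 1 := by
    rw [← Real.exp_nat_mul]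
    congr 1
    field_simp
  have h4 : Real.exp 1 ≤ 3 := by
    have := Real.exp_one_lt_d9; linarith
  calc (1 + 1/(n:ℝ))^n ≤ Real.exp 1 := by rw [← h3]; exact h2
    _ ≤ 3 := h4

lemma pow_div_three_lt_factorial (n : ℕ) (hn : 1 ≤ n) : ((n:ℝ)/3)^n < (n.factorial : ℝ) := by
  induction n with
  | zero => omega
  | succ m ih =>
    rcases Nat.eq_or_lt_of_le hn with h | h
    · simp [← h]; norm_num
    · have hm : 1 ≤ m := by omega
      have ihm := ih hm
      have hm0 : (0:ℝ) < m := by exact_mod_cast hm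
      have key : (((m:ℝ)+1)/3)^m ≤ ((m:ℝ)/3)^m * 3 := by
        have : (((m:ℝ)+1)/3) = ((m:ℝ)/3) * (1 + 1/m) := by field_simp
        rw [this, mul_pow]
        have := one_add_inv_pow_le m hm
        have hnn : (0:ℝ) ≤ ((m:ℝ)/3)^m := by positivity
        nlinarith [pow_nonneg (by positivity : (0:ℝ) ≤ 1 + 1/(m:ℝ)) m]
      have hfac : ((m+1:ℕ) : ℝ) * (m.factorial : ℝ) = ((m+1).factorial : ℝ) := by
        rw [Nat.factorial_succ]; push_cast; ring
      have hcast : ((m+1:ℕ):ℝ) = (m:ℝ)+1 := by push_cast; ring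
      rw [hcast]
      have hsplit : (((m:ℝ)+1)/3)^(m+1) = (((m:ℝ)+1)/3)^m * (((m:ℝ)+1)/3) := by ring
      rw [hsplit]
      push_cast
      push_cast at key ihm
      nlinarith [pow_nonneg (by positivity : (0:ℝ) ≤ ((m:ℝ)+1)/3) m]

lemma det_abs_le_one {n : ℕ} (hn : 1 ≤ n) (M : Matrix (Fin n) (Fin n) ℝ)
    (hrow : ∀ i, ∑ j, M i j ^ 2 ≤ 1) : |M.det| ≤ 1 := by
  set A : Matrix (Fin n) (Fin n) ℝ := Mᴴ * M with hA_def
  have hpsd : A.PosSemidef := posSemidef_conjTranspose_mul_self M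
  have hA : A.IsHermitian := hpsd.1
  -- trace bound
  have htrace : A.trace ≤ (n : ℝ) := by
    have : A.trace = ∑ i, ∑ j, M j i ^ 2 := by
      simp [Matrix.trace, hA_def, Matrix.mul_apply, Matrix.diag, Matrix.conjTranspose_apply,
        sq]
    rw [this, Finset.sum_comm]
    calc ∑ j, ∑ i, M j i ^ 2 ≤ ∑ _j : Fin n, (1:ℝ) := Finset.sum_le_sum fun j _ => hrow j
      _ = (n : ℝ) := by simp
  -- trace = sum of eigenvalues
  have htr_eig : A.trace = ∑ i, hA.eigenvalues i := by
    simpa using hA.trace_eq_sum_eigenvalues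
  -- det = product of eigenvalues
  have hdet_eig : A.det = ∏ i, hA.eigenvalues i := by
    have := hA.det_eq_prod_eigenvalues
    simpa using this
  have heig_nonneg : ∀ i, 0 ≤ hA.eigenvalues i := fun i => hpsd.eigenvalues_nonneg i
  -- AM-GM
  have hn0 : (0:ℝ) < n := by exact_mod_cast hn
  have hamgm : ∏ i, (hA.eigenvalues i) ^ ((1:ℝ)/n) ≤ ∑ i, (1/(n:ℝ)) * hA.eigenvalues i := by
    apply Real.geom_mean_le_arith_mean_weighted
    · intro i _; positivity
    · simp [Finset.card_fin]; field_simp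
    · intro i _; exact heig_nonneg i

  have hsum_le : ∑ i, (1/(n:ℝ)) * hA.eigenvalues i ≤ 1 := by
    rw [← Finset.mul_sum, ← htr_eig]
    rw [div_mul_eq_mul_div, one_mul, div_le_one hn0]
    exact htrace
  have hprod_le : ∏ i, hA.eigenvalues i ≤ 1 := by
    have h1 : (∏ i, (hA.eigenvalues i) ^ ((1:ℝ)/n)) ^ (n:ℕ) ≤ 1 := by
      apply pow_le_one₀ (Finset.prod_nonneg fun i _ => Real.rpow_nonneg (heig_nonneg i) _)
      exact hamgm.trans hsum_le
    calc ∏ i, hA.eigenvalues i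
        = (∏ i, (hA.eigenvalues i) ^ ((1:ℝ)/n)) ^ (n:ℕ) := by
          rw [← Finset.prod_pow]
          apply Finset.prod_congr rfl
          intro i _
          rw [← Real.rpow_natCast ((hA.eigenvalues i) ^ ((1:ℝ)/n)) n,
            ← Real.rpow_mul (heig_nonneg i)]
          rw [one_div, inv_mul_cancel₀ (ne_of_gt hn0), Real.rpow_one]
      _ ≤ 1 := h1
  have hdetA : A.det = M.det ^ 2 := by
    rw [hA_def, Matrix.det_mul, Matrix.det_conjTranspose]
    simp [sq]
  have : M.det ^ 2 ≤ 1 := by rw [← hdetA, hdet_eig]; exact hprod_le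
  rw [← Real.sqrt_one, ← Real.sqrt_sq_eq_abs]
  exact Real.sqrt_le_sqrt this
lemma exists_big_point {n : ℕ} (hn : 1 ≤ n) (M : Matrix (Fin n) (Fin n) ℝ)
    (hrow : ∀ i, ∑ j, M i j ^ 2 ≤ 1) :
    ∃ x : Fin n → ℝ, (∀ i, |∑ j, M i j * x j| ≤ 1) ∧ (n:ℝ)/3 ≤ ∑ j, |x j| := by
  by_contra hcon
  push_neg at hcon
  have hn0 : (0:ℝ) < n := by exact_mod_cast hn
  rcases eq_or_ne M.det 0 with hdet | hdet
  · -- singular case: a whole line lies in K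
    obtain ⟨v, hv0, hv⟩ := (Matrix.exists_mulVec_eq_zero_iff).mpr hdet
    have hs : 0 < ∑ j, |v j| := by
      obtain ⟨j, hj⟩ := Function.ne_iff.mp hv0
      exact Finset.sum_pos' (fun j _ => abs_nonneg _)
        ⟨j, Finset.mem_univ j, abs_pos.mpr (by simpa using hj)⟩
    set c : ℝ := (n:ℝ) / (∑ j, |v j|) with hc
    have hcpos : 0 < c := div_pos hn0 hs
    have hlin : ∀ i, ∑ j, M i j * (c * v j) = 0 := by
      intro i
      have : ∑ j, M i j * v j = 0 := by
        have := congrFun hv i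
        simpa [Matrix.mulVec, dotProduct] using this
      calc ∑ j, M i j * (c * v j) = c * ∑ j, M i j * v j := by
            rw [Finset.mul_sum]; exact Finset.sum_congr rfl fun j _ => by ring
        _ = 0 := by rw [this, mul_zero]
    have := hcon (fun j => c * v j) (fun i => by rw [hlin i]; simp)
    have hsum : ∑ j, |c * v j| = (n:ℝ) := by
      simp only [abs_mul, abs_of_pos hcpos, ← Finset.mul_sum]
      rw [hc, div_mul_cancel₀ _ (ne_of_gt hs)]
    rw [hsum] at this
    linarith
  · -- invertible case : volume argument
    set C : Set (Fin n → ℝ) := Set.univ.pi fun _ : Fin n => Set.Icc (-1:ℝ) 1 with hC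
    set K : Set (Fin n → ℝ) := ⇑(Matrix.toLin' M) ⁻¹' C with hK
    have hdet' : LinearMap.det (Matrix.toLin' M) ≠ 0 := by
      rwa [LinearMap.det_toLin']
    have hvolC : volume C = ENNReal.ofReal 2 ^ n := by
      rw [hC, volume_pi_pi]
      simp [Real.volume_Icc]
      norm_num
    have hvolK : volume C ≤ volume K := by
      rw [hK, Measure.addHaar_preimage_linearMap volume hdet' C]
      refine le_mul_of_one_le_left zero_le ?_
      rw [ENNReal.one_le_ofReal, LinearMap.det_toLin', abs_inv]
      rw [le_inv_comm₀ one_pos (abs_pos.mpr hdet)]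
      simpa using det_abs_le_one hn M hrow
    have hsub : K ⊆ {x : Fin n → ℝ | (∑ j, |x j| ^ (1:ℝ)) ^ (1/(1:ℝ)) < (n:ℝ)/3} := by
      intro x hx
      have hx' : ∀ i, |∑ j, M i j * x j| ≤ 1 := by
        intro i
        have := Set.mem_univ_pi.mp hx i
        simp only [Matrix.toLin'_apply, Matrix.mulVec, dotProduct] at this
        rw [Set.mem_Icc] at this
        exact abs_le.mpr this
      have := hcon x hx'
      simpa using this
    have : Nonempty (Fin n) := ⟨⟨0, hn⟩⟩
    have hvolB := MeasureTheory.volume_sum_rpow_lt (Fin n) (le_refl (1:ℝ)) ((n:ℝ)/3)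
    have hchain : ENNReal.ofReal 2 ^ n ≤
        ENNReal.ofReal ((n:ℝ)/3) ^ n * ENNReal.ofReal ((2 * Real.Gamma (1/1+1)) ^ n /
          Real.Gamma ((Fintype.card (Fin n)) / 1 + 1)) := by
      rw [← hvolC]
      refine hvolK.trans ((measure_mono hsub).trans_eq ?_)
      rw [hvolB]
      simp [Fintype.card_fin]
    rw [Fintype.card_fin] at hchain
    have hgam1 : Real.Gamma (1/1+1) = 1 := by norm_num [Real.Gamma_two]
    have hgam2 : Real.Gamma ((n:ℝ) / 1 + 1) = n.factorial := by
      rw [div_one]; exact Real.Gamma_nat_eq_factorial n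
    rw [hgam1, hgam2] at hchain
    have hnfac : (0:ℝ) < n.factorial := by exact_mod_cast Nat.factorial_pos n
    have hreal : (2:ℝ)^n ≤ ((n:ℝ)/3)^n * (2^n / n.factorial) := by
      have h1 : ENNReal.ofReal ((2:ℝ)^n) ≤ ENNReal.ofReal (((n:ℝ)/3)^n * (2^n / n.factorial)) := by
        rw [ENNReal.ofReal_mul (by positivity)]
        rw [ENNReal.ofReal_pow (by norm_num : (0:ℝ) ≤ 2),
          ENNReal.ofReal_pow (by positivity : (0:ℝ) ≤ (n:ℝ)/3)]
        simpa using hchain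
      rwa [ENNReal.ofReal_le_ofReal_iff (by positivity)] at h1
    have hfac := pow_div_three_lt_factorial n hn
    have h2n : (0:ℝ) < 2^n := by positivity
    have h3 : (n.factorial : ℝ) * 2^n ≤ ((n:ℝ)/3)^n * 2^n := by
      have h := mul_le_mul_of_nonneg_right hreal hnfac.le
      rw [mul_assoc, div_mul_cancel₀ _ (ne_of_gt hnfac)] at h
      nlinarith
    have := le_of_mul_le_mul_right h3 h2n
    linarith

/-- Spherical relaxation of the Komlós conjecture. -/
theorem spherical_komlos :
    ∃ C : ℝ, 0 < C ∧ ∀ n : ℕ, 1 ≤ n → ∀ w : Fin n → Fin n → ℝ,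
      (∀ i, Real.sqrt (∑ j, w i j ^ 2) ≤ 1) →
      ∃ x : Fin n → ℝ, Real.sqrt (∑ i, x i ^ 2) = 1 ∧
        ∀ i, |∑ j, w i j * x j| ≤ C / Real.sqrt n := by
  refine ⟨3, by norm_num, ?_⟩
  intro n hn w hw
  have hn0 : (0:ℝ) < n := by exact_mod_cast hn
  have hrow : ∀ i, ∑ j, w i j ^ 2 ≤ 1 := by
    intro i
    have hnn : (0:ℝ) ≤ ∑ j, w i j ^ 2 := Finset.sum_nonneg fun j _ => sq_nonneg _
    have := hw i
    nlinarith [Real.sq_sqrt hnn, Real.sqrt_nonneg (∑ j, w i j ^ 2)]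
  obtain ⟨x₀, h1, h2⟩ := exists_big_point hn (Matrix.of w) hrow
  -- Cauchy-Schwarz to get a lower bound on the ℓ2 norm
  have hcs : ((n:ℝ)/3)^2 ≤ (n:ℝ) * ∑ j, x₀ j ^ 2 := by
    have hcs0 : (∑ j, |x₀ j|) ^ 2 ≤ (((Finset.univ : Finset (Fin n)).card : ℕ) : ℝ) * ∑ j, |x₀ j| ^ 2 := by
      exact_mod_cast sq_sum_le_card_mul_sum_sq (s := (Finset.univ : Finset (Fin n)))
        (f := fun j => |x₀ j|)
    simp only [Finset.card_univ, Fintype.card_fin, sq_abs] at hcs0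
    have h2' : ((n:ℝ)/3)^2 ≤ (∑ j, |x₀ j|)^2 := by
      apply sq_le_sq' <;> nlinarith [Finset.sum_nonneg (fun j (_ : j ∈ Finset.univ) => abs_nonneg (x₀ j))]
    linarith
  have hsum_pos : (0:ℝ) < ∑ j, x₀ j ^ 2 := by nlinarith
  set s : ℝ := Real.sqrt (∑ j, x₀ j ^ 2) with hs
  have hspos : 0 < s := Real.sqrt_pos.mpr hsum_pos
  have hs_ge : Real.sqrt n / 3 ≤ s := by
    rw [hs, show Real.sqrt n / 3 = Real.sqrt (n/9) by
      rw [show (n:ℝ)/9 = n / 3^2 by norm_num, Real.sqrt_div' , Real.sqrt_sq] <;> norm_num]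
    apply Real.sqrt_le_sqrt
    nlinarith
  refine ⟨fun j => x₀ j / s, ?_, ?_⟩
  · have hssq : s^2 = ∑ j, x₀ j ^ 2 := Real.sq_sqrt hsum_pos.le
    have heq : ∑ i, (x₀ i / s)^2 = (∑ i, x₀ i ^ 2)/s^2 := by
      rw [Finset.sum_div]
      exact Finset.sum_congr rfl fun i _ => by ring
    rw [heq, ← hssq, div_self (by positivity : (s:ℝ)^2 ≠ 0), Real.sqrt_one]
  · intro i
    have hrw : ∑ j, w i j * (x₀ j / s) = (∑ j, w i j * x₀ j) / s := by
      rw [Finset.sum_div]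
      exact Finset.sum_congr rfl fun j _ => by ring
    rw [hrw, abs_div, abs_of_pos hspos]
    have hb : |∑ j, w i j * x₀ j| ≤ 1 := h1 i
    have hsn : 0 < Real.sqrt n := Real.sqrt_pos.mpr hn0
    calc |∑ j, w i j * x₀ j| / s ≤ 1 / s := by gcongr
      _ ≤ 3 / Real.sqrt n := by
          rw [div_le_div_iff₀ hspos hsn]
          nlinarith
end

section
/- Let W be a nonsingular n×n real matrix and let α > 0 satisfy: for all x with ‖x‖₂ = 1, ‖Wx‖_∞ ≥ α. Then |det W| ≥ αⁿ · 2ⁿ · Γ(n/2+1) / π^{n/2}. -/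
open Matrix Real MeasureTheory

/-- If `‖Wx‖_∞ ≥ α` on the Euclidean unit sphere, then
`|det W| ≥ αⁿ · 2ⁿ · Γ(n/2+1) / π^{n/2}`. -/
theorem det_ge_of_min_sup_norm
    (n : ℕ) (W : Matrix (Fin n) (Fin n) ℝ) (hW : W.det ≠ 0)
    (α : ℝ) (hα : 0 < α)
    (h : ∀ x : Fin n → ℝ, Real.sqrt (∑ i, x i ^ 2) = 1 → α ≤ ‖W.mulVec x‖) :
    α ^ n * 2 ^ n * Real.Gamma ((n : ℝ) / 2 + 1) / π ^ ((n : ℝ) / 2) ≤ |W.det| := by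
  rcases Nat.eq_zero_or_pos n with hn | hn
  · subst hn
    simp [Matrix.det_fin_zero, Real.Gamma_one]
  haveI : Nonempty (Fin n) := ⟨⟨0, hn⟩⟩
  -- the linear map
  set f : (Fin n → ℝ) →ₗ[ℝ] (Fin n → ℝ) := Matrix.toLin' W with hf
  have hdet : LinearMap.det f = W.det := LinearMap.det_toLin' W
  have hfd : LinearMap.det f ≠ 0 := by rw [hdet]; exact hW
  -- the Euclidean ball as a subset of the pi space
  set B : Set (Fin n → ℝ) := {x | ∑ i, x i ^ 2 ≤ 1} with hB
  -- the cube is contained in the image of the ball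
  have hsub : Metric.ball (0 : Fin n → ℝ) α ⊆ f '' B := by
    intro y hy
    rw [mem_ball_zero_iff] at hy
    set e := f.equivOfDetNeZero hfd with he
    set x : Fin n → ℝ := e.symm y with hx
    have hfx : f x = y := by
      have := e.apply_symm_apply y
      simpa [hx, he] using this
    refine ⟨x, ?_, hfx⟩
    by_contra hc
    rw [hB, Set.mem_setOf_eq, not_le] at hc
    set s := Real.sqrt (∑ i, x i ^ 2) with hs
    have hs1 : 1 < s := by
      rw [hs]
      nlinarith [Real.sq_sqrt (le_of_lt (lt_trans one_pos hc) : (0:ℝ) ≤ ∑ i, x i ^ 2),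
        Real.sqrt_nonneg (∑ i, x i ^ 2)]
    have hs0 : 0 < s := lt_trans one_pos hs1
    have hnorm : Real.sqrt (∑ i, (s⁻¹ * x i) ^ 2) = 1 := by
      have : ∑ i, (s⁻¹ * x i) ^ 2 = s⁻¹ ^ 2 * ∑ i, x i ^ 2 := by
        rw [Finset.mul_sum]; congr 1; ext i; ring
      rw [this, Real.sqrt_mul (sq_nonneg _), Real.sqrt_sq (le_of_lt (inv_pos.mpr hs0)), ← hs,
        inv_mul_cancel₀ (ne_of_gt hs0)]
    have hmv : W.mulVec (fun i => s⁻¹ * x i) = s⁻¹ • y := by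
      have : (fun i => s⁻¹ * x i) = s⁻¹ • x := by ext i; simp [Pi.smul_apply, smul_eq_mul]
      rw [this, Matrix.mulVec_smul, ← hfx]
      rfl
    have := h (fun i => s⁻¹ * x i) hnorm
    rw [hmv, norm_smul] at this
    have h2 : α ≤ s⁻¹ * ‖y‖ := by
      simpa [abs_of_pos (inv_pos.mpr hs0), abs_of_pos hs0] using this
    have : s⁻¹ * ‖y‖ < α := by
      calc s⁻¹ * ‖y‖ ≤ 1 * ‖y‖ := by
            apply mul_le_mul_of_nonneg_right _ (norm_nonneg y)
            rw [inv_le_one_iff₀]; right; exact le_of_lt hs1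
        _ = ‖y‖ := one_mul _
        _ < α := hy
    linarith
  -- volume computations
  have hBmeas : MeasurableSet B := by
    apply measurableSet_le (by fun_prop) measurable_const
  have hvolB : volume B = ENNReal.ofReal (Real.sqrt π ^ n / Real.Gamma (n / 2 + 1)) := by
    have hpre : (MeasurableEquiv.toLp 2 (Fin n → ℝ)).symm ⁻¹' B
        = Metric.closedBall (0 : EuclideanSpace ℝ (Fin n)) 1 := by
      rw [EuclideanSpace.closedBall_zero_eq _ zero_le_one, one_pow]
      rfl
    have := (EuclideanSpace.volume_preserving_symm_measurableEquiv_toLp (Fin n)).measure_preimage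
      hBmeas.nullMeasurableSet
    rw [hpre] at this
    rw [← this, EuclideanSpace.volume_closedBall, Fintype.card_fin, ENNReal.ofReal_one,
      one_pow, one_mul]
  have himg : volume (f '' B) = ENNReal.ofReal |W.det| * volume B := by
    rw [Measure.addHaar_image_linearMap, hdet]
  have hcube : volume (Metric.ball (0 : Fin n → ℝ) α) = ENNReal.ofReal ((2 * α) ^ n) := by
    rw [Real.volume_pi_ball 0 hα, Fintype.card_fin]
  have hle : ENNReal.ofReal ((2 * α) ^ n)
      ≤ ENNReal.ofReal |W.det| * ENNReal.ofReal (Real.sqrt π ^ n / Real.Gamma (n / 2 + 1)) := by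
    rw [← hcube, ← hvolB, ← himg]
    exact measure_mono hsub
  rw [← ENNReal.ofReal_mul (abs_nonneg _)] at hle
  have hΓ : 0 < Real.Gamma ((n : ℝ) / 2 + 1) := Real.Gamma_pos_of_pos (by positivity)
  have hsp : (0:ℝ) < Real.sqrt π ^ n := pow_pos (Real.sqrt_pos.mpr Real.pi_pos) n
  have hreal : (2 * α) ^ n ≤ |W.det| * (Real.sqrt π ^ n / Real.Gamma ((n:ℝ) / 2 + 1)) := by
    have := (ENNReal.ofReal_le_ofReal_iff (by positivity)).mp hle
    exact this
  have hrpow : π ^ ((n : ℝ) / 2) = Real.sqrt π ^ n := by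
    rw [Real.sqrt_eq_rpow, ← Real.rpow_natCast (π ^ (1/2 : ℝ)) n,
      ← Real.rpow_mul Real.pi_pos.le]
    ring_nf
  rw [hrpow]
  rw [div_le_iff₀ hsp]
  have hreal2 : (2 * α) ^ n * Real.Gamma ((n:ℝ) / 2 + 1) ≤ |W.det| * Real.sqrt π ^ n := by
    have := mul_le_mul_of_nonneg_right hreal hΓ.le
    rwa [mul_assoc, div_mul_cancel₀ _ hΓ.ne'] at this
  calc α ^ n * 2 ^ n * Real.Gamma ((n : ℝ) / 2 + 1)
      = (2 * α) ^ n * Real.Gamma ((n : ℝ) / 2 + 1) := by rw [mul_pow]; ring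
    _ ≤ |W.det| * Real.sqrt π ^ n := hreal2
end

section
/- Let w₁,…,wₙ ∈ ℝⁿ satisfy ∏ᵢ ‖wᵢ‖₂ ≤ 1, and let W be the matrix with columns wᵢ. Then there exists a unit vector x ∈ ℝⁿ with ‖Wx‖_∞ ≤ √π / (2 · Γ(n/2+1)^{1/n}). -/
open Matrix Real MeasureTheory Set

/-- Hadamard's inequality for columns. -/
lemma hadamard_cols {n : ℕ} (W : Matrix (Fin n) (Fin n) ℝ) :
    |W.det| ≤ ∏ i, Real.sqrt (∑ j, W j i ^ 2) := by
  haveI : Fact (Module.finrank ℝ (EuclideanSpace ℝ (Fin n)) = n) := ⟨finrank_euclideanSpace_fin⟩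
  set b := EuclideanSpace.basisFun (Fin n) ℝ with hb
  set o := b.toBasis.orientation with ho
  set v : Fin n → EuclideanSpace ℝ (Fin n) :=
    fun i => (EuclideanSpace.equiv (Fin n) ℝ).symm (fun j => W j i) with hv
  have h1 := o.abs_volumeForm_apply_le v
  have h2 := o.volumeForm_robust' b v
  have h3 : b.toBasis.det v = W.det := by
    rw [Module.Basis.det_apply]
    congr 1
  have h4 : ∀ i, ‖v i‖ = Real.sqrt (∑ j, W j i ^ 2) := fun i => by
    simp [hv, EuclideanSpace.norm_eq, Real.norm_eq_abs, sq_abs]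
  calc |W.det| = |b.toBasis.det v| := by rw [h3]
    _ = |o.volumeForm v| := h2.symm
    _ ≤ ∏ i, ‖v i‖ := h1
    _ = ∏ i, Real.sqrt (∑ j, W j i ^ 2) := Finset.prod_congr rfl fun i _ => h4 i

lemma sqrt_sum_sq_smul {n : ℕ} {c : ℝ} (hc : 0 ≤ c) (y : Fin n → ℝ) :
    Real.sqrt (∑ i, (c • y) i ^ 2) = c * Real.sqrt (∑ i, y i ^ 2) := by
  have : ∑ i, (c • y) i ^ 2 = c ^ 2 * ∑ i, y i ^ 2 := by
    rw [Finset.mul_sum]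
    refine Finset.sum_congr rfl fun i _ => by
      simp [Pi.smul_apply, smul_eq_mul, mul_pow]
  rw [this, Real.sqrt_mul (sq_nonneg c), Real.sqrt_sq hc]

/-- Geometric-mean version: if `∏ᵢ ‖wᵢ‖₂ ≤ 1` then some unit vector `x` has
`‖Wx‖_∞ ≤ √π / (2 Γ(n/2+1)^{1/n})`. -/
theorem exists_unit_vector_of_prod_norms_le_one
    (n : ℕ) (hn : 1 ≤ n) (W : Matrix (Fin n) (Fin n) ℝ)
    (hprod : ∏ i, Real.sqrt (∑ j, W j i ^ 2) ≤ 1) :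
    ∃ x : Fin n → ℝ, Real.sqrt (∑ i, x i ^ 2) = 1 ∧
      ‖W.mulVec x‖ ≤ Real.sqrt π / (2 * Real.Gamma ((n : ℝ) / 2 + 1) ^ ((1 : ℝ) / n)) := by
  have hnne : n ≠ 0 := by omega
  have hn0 : (n : ℝ) ≠ 0 := Nat.cast_ne_zero.mpr hnne
  haveI : Nonempty (Fin n) := ⟨⟨0, by omega⟩⟩
  set G := Real.Gamma ((n : ℝ) / 2 + 1) with hG
  have hGpos : 0 < G := Real.Gamma_pos_of_pos (by positivity)
  set r := Real.sqrt π / (2 * G ^ ((1 : ℝ) / n)) with hrdef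
  have hrpos : 0 < r := div_pos (Real.sqrt_pos.mpr Real.pi_pos) (by positivity)
  -- the key real identity: (2r)^n = √π^n / G
  have hkey : (2 * r) ^ n = Real.sqrt π ^ n / G := by
    have h1 : 2 * r = Real.sqrt π / G ^ ((1 : ℝ) / n) := by
      rw [hrdef]; field_simp
    have h2 : (G ^ ((1 : ℝ) / n)) ^ n = G := by
      rw [← Real.rpow_natCast (G ^ ((1 : ℝ) / n)) n, ← Real.rpow_mul hGpos.le]
      rw [one_div_mul_cancel hn0, Real.rpow_one]
    rw [h1, div_pow, h2]
  -- the open Euclidean unit ball inside `Fin n → ℝ`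
  set B : Set (Fin n → ℝ) := {x | Real.sqrt (∑ i, x i ^ 2) < 1} with hBdef
  have hBopen : IsOpen B := by
    refine isOpen_lt ?_ continuous_const
    exact (continuous_finset_sum _ fun i _ => (continuous_apply i).pow 2).sqrt
  have hcoe : ∀ (x : Fin n → ℝ) (i : Fin n),
      (((MeasurableEquiv.toLp 2 (Fin n → ℝ)).symm).symm x) i = x i := fun x i => rfl
  have hBball : B = ((MeasurableEquiv.toLp 2 (Fin n → ℝ)).symm).symm ⁻¹' Metric.ball 0 1 := by
    ext x
    simp only [hBdef, Set.mem_setOf_eq, Set.mem_preimage, Metric.mem_ball, dist_zero_right,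
      EuclideanSpace.norm_eq, hcoe, Real.norm_eq_abs, sq_abs]
  have hBvol : volume B = ENNReal.ofReal ((2 * r) ^ n) := by
    rw [hBball,
      ((EuclideanSpace.volume_preserving_symm_measurableEquiv_toLp (Fin n)).symm ((MeasurableEquiv.toLp 2 (Fin n → ℝ)).symm)).measure_preimage
        measurableSet_ball.nullMeasurableSet,
      EuclideanSpace.volume_ball]
    simp only [Fintype.card_fin]
    rw [hkey, ENNReal.ofReal_one, one_pow, one_mul]
  have hBfin : volume B ≠ ⊤ := by rw [hBvol]; exact ENNReal.ofReal_ne_top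
  -- case split on the determinant
  by_cases hdet : W.det = 0
  · -- kernel vector
    obtain ⟨y, hy0, hyW⟩ := (Matrix.exists_mulVec_eq_zero_iff).mpr hdet
    set c := Real.sqrt (∑ i, y i ^ 2) with hc
    have hsum : 0 < ∑ i, y i ^ 2 := by
      obtain ⟨i, hi⟩ := Function.ne_iff.mp hy0
      exact Finset.sum_pos' (fun j _ => sq_nonneg (y j)) ⟨i, Finset.mem_univ i, sq_pos_of_ne_zero hi⟩
    have hcpos : 0 < c := Real.sqrt_pos.mpr hsum
    refine ⟨c⁻¹ • y, ?_, ?_⟩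
    · rw [sqrt_sum_sq_smul (by positivity) y, ← hc, inv_mul_cancel₀ hcpos.ne']
    · rw [Matrix.mulVec_smul, hyW, smul_zero, norm_zero]
      exact hrpos.le
  · -- invertible case: volume argument
    set f := Matrix.toLin' W with hf
    have hfdet : LinearMap.det f = W.det := LinearMap.det_toLin' W
    have hfdet0 : LinearMap.det f ≠ 0 := by rw [hfdet]; exact hdet
    set S : Set (Fin n → ℝ) := f ⁻¹' Metric.closedBall 0 r with hSdef
    have hScl : IsClosed S := Metric.isClosed_closedBall.preimage f.continuous_of_finiteDimensional
    have hSvol : volume S = ENNReal.ofReal |W.det⁻¹| * ENNReal.ofReal ((2 * r) ^ n) := by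
      rw [hSdef, Measure.addHaar_preimage_linearMap volume hfdet0, hfdet,
        Real.volume_pi_closedBall 0 hrpos.le, Fintype.card_fin]
    have hdet_le : |W.det| ≤ 1 := le_trans (hadamard_cols W) hprod
    have hinv_ge : (1 : ℝ) ≤ |W.det⁻¹| := by
      rw [abs_inv]
      rw [le_inv_comm₀ one_pos (abs_pos.mpr hdet)]
      simpa using hdet_le
    have hvol_le : volume B ≤ volume S := by
      rw [hSvol, hBvol]
      calc ENNReal.ofReal ((2 * r) ^ n) = 1 * ENNReal.ofReal ((2 * r) ^ n) := (one_mul _).symm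
        _ ≤ ENNReal.ofReal |W.det⁻¹| * ENNReal.ofReal ((2 * r) ^ n) := by
            gcongr
            rw [← ENNReal.ofReal_one]
            exact ENNReal.ofReal_le_ofReal hinv_ge
    -- S is not contained in B
    have hnsub : ¬ S ⊆ B := by
      intro hsub
      have hSB : volume S ≤ volume B := measure_mono hsub
      have heq : volume S = volume B := le_antisymm hSB hvol_le
      have hdiff : volume (B \ S) = 0 := by
        rw [measure_diff hsub hScl.measurableSet.nullMeasurableSet
          (heq ▸ hBfin), heq, tsub_self]
      have hopen : IsOpen (B \ S) := hBopen.sdiff hScl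
      have hempty : B \ S = ∅ := hopen.eq_empty_of_measure_zero hdiff
      have hBS : B = S := Subset.antisymm (diff_eq_empty.mp hempty) hsub
      have hclopen : IsClopen B := ⟨hBS ▸ hScl, hBopen⟩
      rcases isClopen_iff.mp hclopen with h | h
      · have : (0 : Fin n → ℝ) ∈ B := by simp [hBdef]
        rw [h] at this; exact this
      · set p : Fin n → ℝ := fun j => if j = ⟨0, by omega⟩ then 1 else 0 with hp
        have hpsum : ∑ i, p i ^ 2 = 1 := by
          rw [hp]
          rw [Finset.sum_eq_single (⟨0, by omega⟩ : Fin n)] <;> simp +contextual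
        have : p ∉ B := by simp [hBdef, hpsum]
        rw [h] at this; exact this trivial
    obtain ⟨y, hyS, hyB⟩ := not_subset.mp hnsub
    have hyr : ‖W.mulVec y‖ ≤ r := by
      have := hyS
      rw [hSdef, Set.mem_preimage, Metric.mem_closedBall, dist_zero_right] at this
      simpa [hf, Matrix.toLin'_apply] using this
    set c := Real.sqrt (∑ i, y i ^ 2) with hc
    have hc1 : 1 ≤ c := not_lt.mp hyB
    have hcpos : 0 < c := lt_of_lt_of_le one_pos hc1
    refine ⟨c⁻¹ • y, ?_, ?_⟩
    · rw [sqrt_sum_sq_smul (by positivity) y, ← hc, inv_mul_cancel₀ hcpos.ne']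
    · rw [Matrix.mulVec_smul, norm_smul, Real.norm_eq_abs, abs_inv, abs_of_pos hcpos]
      calc c⁻¹ * ‖W.mulVec y‖ ≤ 1 * r := by
            apply mul_le_mul _ hyr (norm_nonneg _) zero_le_one
            exact inv_le_one_of_one_le₀ hc1
        _ = r := one_mul r
end
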